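/- arXiv:2602.06215 — 5 statements merged into one kernel-verified Lean document; each statement's English description precedes it below -/
import Mathlib

section
/- Let n ≥ 1, μ > 0, and let L : ℝ → Matrix (Fin n) (Fin n) ℝ be a time-varying matrix such that for every t: L(t) is symmetric, L(t) annihilates the all-ones vector (L(t) *ᵥ 𝟙 = 0), and for every y ∈ ℝⁿ with ∑ᵢ yᵢ = 0 one has ⟪y, L(t) *ᵥ y⟫ ≥ μ‖y‖². If x : ℝ → (Fin n → ℝ) is differentiable and satisfies the first-order consensus dynamics x′(t) = −L(t) *ᵥ x(t) for all t ≥ 0, then all agents reach consensus on the initial average: for every i, xᵢ(t) → (1/n) ∑ⱼ xⱼ(0) as t → ∞; in particular |xᵢ(t) − xⱼ(t)| → 0 for all i, j. -/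
open Filter Matrix

/-- First-order consensus under time-varying symmetric Laplacians with a
uniform algebraic-connectivity lower bound `μ > 0`: every agent's state converges to the
initial average, and in particular all pairwise disagreements vanish. -/
theorem first_order_consensus
    (n : ℕ) (hn : 1 ≤ n) (μ : ℝ) (hμ : 0 < μ)
    (L : ℝ → Matrix (Fin n) (Fin n) ℝ)
    (hsymm : ∀ t, (L t).IsSymm)
    (hones : ∀ t, (L t) *ᵥ (fun _ => (1 : ℝ)) = 0)
    (hconn : ∀ t, ∀ y : Fin n → ℝ, (∑ i, y i) = 0 →
      μ * (∑ i, (y i) ^ 2) ≤ ∑ i, y i * ((L t) *ᵥ y) i)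
    (x : ℝ → Fin n → ℝ)
    (hdiff : Differentiable ℝ x)
    (hode : ∀ t, 0 ≤ t → HasDerivAt x (-((L t) *ᵥ x t)) t) :
    (∀ i, Tendsto (fun t => x t i) atTop (nhds ((1 / (n : ℝ)) * ∑ j, x 0 j))) ∧
    (∀ i j, Tendsto (fun t => |x t i - x t j|) atTop (nhds 0)) := by
  classical
  have hn0 : (n : ℝ) ≠ 0 := by positivity
  set c : ℝ := (1 / (n : ℝ)) * ∑ j, x 0 j with hc
  -- component derivatives
  have hcomp : ∀ t, 0 ≤ t → ∀ i, HasDerivAt (fun s => x s i) (-((L t) *ᵥ x t) i) t :=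
    fun t ht i => hasDerivAt_pi.1 (hode t ht) i
  have hdiffc : ∀ i, Differentiable ℝ (fun s => x s i) := by
    intro i s
    exact (hasDerivAt_pi.1 (hdiff s).hasDerivAt i).differentiableAt
  -- column sums of L vanish
  have hcol : ∀ t (k : Fin n), ∑ j, L t j k = 0 := by
    intro t k
    have h1 := congrFun (hones t) k
    simp only [mulVec, dotProduct, mul_one, Pi.zero_apply] at h1
    calc ∑ j, L t j k = ∑ j, L t k j := Finset.sum_congr rfl fun j _ => (hsymm t).apply k j
    _ = 0 := h1
  -- sum of Lx vanishes
  have hsumLx : ∀ t, ∑ i, ((L t) *ᵥ x t) i = 0 := by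
    intro t
    simp only [mulVec, dotProduct]
    rw [Finset.sum_comm]
    simp [← Finset.sum_mul, hcol t]
  -- sum of states has zero derivative for t ≥ 0
  have hsumd : ∀ t, 0 ≤ t → HasDerivAt (fun s => ∑ j, x s j) 0 t := by
    intro t ht
    have h := HasDerivAt.fun_sum (u := Finset.univ) (fun i _ => hcomp t ht i)
    have h0 : (∑ i, -((L t) *ᵥ x t) i) = 0 := by
      rw [Finset.sum_neg_distrib, hsumLx t, neg_zero]
    rwa [h0] at h
  -- the sum is constant on [0, ∞)
  have hconst : ∀ t, 0 ≤ t → ∑ j, x t j = ∑ j, x 0 j := by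
    intro t ht
    have hcont : ContinuousOn (fun s => ∑ j, x s j) (Set.Icc 0 t) :=
      (Differentiable.fun_sum fun j _ => hdiffc j).continuous.continuousOn
    exact constant_of_has_deriv_right_zero hcont
      (fun y hy => (hsumd y hy.1).hasDerivWithinAt) t (Set.mem_Icc.2 ⟨ht, le_refl t⟩)
  -- zero-sum of the deviation
  have hzero : ∀ t, 0 ≤ t → ∑ i, (x t i - c) = 0 := by
    intro t ht
    rw [Finset.sum_sub_distrib, hconst t ht, Finset.sum_const]
    simp only [hc, Finset.card_univ, Fintype.card_fin, nsmul_eq_mul]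
    field_simp
    ring
  -- Lyapunov function
  set V : ℝ → ℝ := fun t => ∑ i, (x t i - c) ^ 2 with hV
  have hVnonneg : ∀ t, 0 ≤ V t := fun t => Finset.sum_nonneg fun i _ => sq_nonneg _
  have hVcont : Continuous V :=
    continuous_finset_sum _ fun i _ => (((hdiffc i).continuous).sub continuous_const).pow 2
  -- derivative of V
  have hVd : ∀ t, 0 ≤ t →
      HasDerivAt V (∑ i, (2 : ℕ) * (x t i - c) ^ 1 * (-((L t) *ᵥ x t) i)) t := by
    intro t ht
    exact HasDerivAt.fun_sum fun i _ => ((hcomp t ht i).sub_const c).pow 2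
  -- Lx = Ly on the deviation
  have hLx : ∀ t, 0 ≤ t → (L t) *ᵥ (x t) = (L t) *ᵥ (fun i => x t i - c) := by
    intro t _
    have hx : x t = (fun i => x t i - c) + c • (fun _ => (1 : ℝ)) := by
      funext i; simp
    rw [hx, mulVec_add, mulVec_smul, hones t]
    simp
  -- derivative bound
  have hbound : ∀ t, 0 ≤ t →
      (∑ i, (2 : ℕ) * (x t i - c) ^ 1 * (-((L t) *ᵥ x t) i)) ≤ -(2 * μ) * V t := by
    intro t ht
    have hcn := hconn t (fun i => x t i - c) (hzero t ht)
    have heq : (∑ i, (2 : ℕ) * (x t i - c) ^ 1 * (-((L t) *ᵥ x t) i))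
        = -2 * ∑ i, (x t i - c) * ((L t) *ᵥ (fun i => x t i - c)) i := by
      rw [hLx t ht, Finset.mul_sum]
      refine Finset.sum_congr rfl fun i _ => by ring
    rw [heq, hV]
    nlinarith [hcn]
  -- exponential weight
  have hWd : ∀ t, 0 ≤ t → HasDerivAt (fun s => Real.exp (2 * μ * s) * V s)
      (Real.exp (2 * μ * t) * (2 * μ) * V t
        + Real.exp (2 * μ * t) * (∑ i, (2 : ℕ) * (x t i - c) ^ 1 * (-((L t) *ᵥ x t) i))) t := by
    intro t ht
    have h := (((hasDerivAt_id t).const_mul (2 * μ)).exp).fun_mul (hVd t ht)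
    simpa [mul_one] using h
  set W : ℝ → ℝ := fun s => Real.exp (2 * μ * s) * V s with hW
  have hWanti : AntitoneOn W (Set.Ici 0) := by
    refine antitoneOn_of_deriv_nonpos (convex_Ici 0)
      ((Real.continuous_exp.comp (continuous_const.mul continuous_id)).mul hVcont).continuousOn
      (fun t ht => ?_) (fun t ht => ?_)
    · rw [interior_Ici] at ht
      exact (hWd t (le_of_lt ht)).differentiableAt.differentiableWithinAt
    · rw [interior_Ici] at ht
      have ht' : (0 : ℝ) ≤ t := le_of_lt ht
      rw [(hWd t ht').deriv]
      have hb := hbound t ht'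
      have hexp : 0 < Real.exp (2 * μ * t) := Real.exp_pos _
      nlinarith [hVnonneg t]
  -- decay estimate
  have hdecay : ∀ t, 0 ≤ t → V t ≤ V 0 * (Real.exp (2 * μ * t))⁻¹ := by
    intro t ht
    have h := hWanti (Set.mem_Ici.2 (le_refl (0:ℝ))) (Set.mem_Ici.2 ht) ht
    have h0 : W 0 = V 0 := by simp [hW]
    have hexp : 0 < Real.exp (2 * μ * t) := Real.exp_pos _
    rw [h0] at h
    rw [hW] at h
    calc V t = (Real.exp (2 * μ * t) * V t) * (Real.exp (2 * μ * t))⁻¹ := by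
          field_simp
    _ ≤ V 0 * (Real.exp (2 * μ * t))⁻¹ := by
          apply mul_le_mul_of_nonneg_right h (by positivity)
  -- V → 0
  have hVtend : Tendsto V atTop (nhds 0) := by
    have hlin : Tendsto (fun t : ℝ => 2 * μ * t) atTop atTop :=
      Tendsto.const_mul_atTop (by positivity) tendsto_id
    have hexp0 : Tendsto (fun t : ℝ => (Real.exp (2 * μ * t))⁻¹) atTop (nhds 0) :=
      (Real.tendsto_exp_atTop.comp hlin).inv_tendsto_atTop
    have hub : Tendsto (fun t : ℝ => V 0 * (Real.exp (2 * μ * t))⁻¹) atTop (nhds 0) := by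
      simpa using hexp0.const_mul (V 0)
    refine squeeze_zero' (Filter.Eventually.of_forall fun t => hVnonneg t) ?_ hub
    filter_upwards [eventually_ge_atTop (0:ℝ)] with t ht using hdecay t ht
  -- each deviation tends to 0
  have hdev : ∀ i, Tendsto (fun t => x t i - c) atTop (nhds 0) := by
    intro i
    rw [tendsto_zero_iff_abs_tendsto_zero]
    have hsq : Tendsto (fun t => (x t i - c) ^ 2) atTop (nhds 0) := by
      refine squeeze_zero (fun t => sq_nonneg _) (fun t => ?_) hVtend
      exact Finset.single_le_sum (fun j _ => sq_nonneg (x t j - c)) (Finset.mem_univ i)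
    have h2 : Tendsto (fun t => Real.sqrt ((x t i - c) ^ 2)) atTop (nhds 0) := by
      simpa [Real.sqrt_zero, Function.comp_def] using (Real.continuous_sqrt.tendsto 0).comp hsq
    exact h2.congr fun t => Real.sqrt_sq_eq_abs _
  have hmain : ∀ i, Tendsto (fun t => x t i) atTop (nhds c) := by
    intro i
    have := (hdev i).add_const c
    simpa using this
  refine ⟨hmain, fun i j => ?_⟩
  have hsub : Tendsto (fun t => x t i - x t j) atTop (nhds 0) := by
    have := (hmain i).sub (hmain j)
    simpa using this
  have := (continuous_abs.tendsto 0).comp hsub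
  simpa [Function.comp_def] using this
end

section
/- Let n ≥ 1, μ > 0, and let L : ℝ → Matrix (Fin n) (Fin n) ℝ be such that for every t: L(t) is symmetric, L(t) *ᵥ 𝟙 = 0, and ⟪y, L(t) *ᵥ y⟫ ≥ μ‖y‖² for every y ∈ ℝⁿ with ∑ᵢ yᵢ = 0. Let y : ℝ → (Fin n → ℝ) be differentiable with y′(t) = −L(t) *ᵥ y(t) for all t ≥ 0 and ∑ᵢ yᵢ(0) = 0. Then ∑ᵢ yᵢ(t) = 0 for all t ≥ 0 and the disagreement decays exponentially: ‖y(t)‖ ≤ e^{−μ t} ‖y(0)‖ for all t ≥ 0. -/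
open Filter Matrix

/-- For the disagreement dynamics `y' = -L(t) y` with symmetric Laplacians
annihilating `𝟙` and a uniform connectivity bound `μ > 0` on the zero-sum subspace,
the zero-sum property is preserved and the disagreement decays exponentially. -/
theorem disagreement_exponential_decay
    (n : ℕ) (hn : 1 ≤ n) (μ : ℝ) (hμ : 0 < μ)
    (L : ℝ → Matrix (Fin n) (Fin n) ℝ)
    (hsymm : ∀ t, (L t).IsSymm)
    (hones : ∀ t, (L t) *ᵥ (fun _ => (1 : ℝ)) = 0)
    (hconn : ∀ t, ∀ y : Fin n → ℝ, (∑ i, y i) = 0 →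
      μ * (∑ i, (y i) ^ 2) ≤ ∑ i, y i * ((L t) *ᵥ y) i)
    (y : ℝ → Fin n → ℝ)
    (hdiff : Differentiable ℝ y)
    (hode : ∀ t, 0 ≤ t → HasDerivAt y (-((L t) *ᵥ y t)) t)
    (hzero : ∑ i, y 0 i = 0) :
    (∀ t, 0 ≤ t → ∑ i, y t i = 0) ∧
    (∀ t, 0 ≤ t →
      Real.sqrt (∑ i, (y t i) ^ 2) ≤ Real.exp (-μ * t) * Real.sqrt (∑ i, (y 0 i) ^ 2)) := by
  have hcoord : ∀ t, 0 ≤ t → ∀ i, HasDerivAt (fun s => y s i) ((-((L t) *ᵥ y t)) i) t := by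
    intro t ht i
    exact hasDerivAt_pi.mp (hode t ht) i
  have hdiffc : ∀ i, Differentiable ℝ (fun s => y s i) := fun i =>
    differentiable_pi.mp hdiff i
  -- the columns of L t sum to zero, hence (L t *ᵥ v) sums to zero
  have hLsum : ∀ t (v : Fin n → ℝ), ∑ i, ((L t) *ᵥ v) i = 0 := by
    intro t v
    have h1 := hones t
    simp only [mulVec, dotProduct] at h1 ⊢
    rw [Finset.sum_comm]
    apply Finset.sum_eq_zero
    intro j _
    rw [← Finset.sum_mul]
    have hj := congrFun h1 j
    simp only [mul_one, Pi.zero_apply] at hj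
    have hcol : ∑ i, (L t) i j = 0 := by
      rw [← hj]
      refine Finset.sum_congr rfl fun i _ => ?_
      rw [mul_one]
      exact (hsymm t).apply i j |>.symm
    rw [hcol, zero_mul]
  -- Part 1 : zero-sum preserved
  have hsder : ∀ t, 0 ≤ t → HasDerivAt (fun s => ∑ i, y s i) 0 t := by
    intro t ht
    have h := HasDerivAt.fun_sum (fun i (_ : i ∈ Finset.univ) => hcoord t ht i)
    have : ∑ i, (-((L t) *ᵥ y t)) i = 0 := by
      simp only [Pi.neg_apply, Finset.sum_neg_distrib, hLsum t (y t), neg_zero]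
    rwa [this] at h
  have hScont : Continuous (fun s => ∑ i, y s i) := by
    exact continuous_finset_sum _ fun i _ => (hdiffc i).continuous
  have hSdiff : Differentiable ℝ (fun s => ∑ i, y s i) :=
    Differentiable.fun_sum fun i _ => hdiffc i
  have hSconst : ∀ t, 0 ≤ t → ∑ i, y t i = 0 := by
    have hderiv0 : ∀ x ∈ interior (Set.Ici (0:ℝ)), deriv (fun s => ∑ i, y s i) x = 0 := by
      intro x hx
      rw [interior_Ici] at hx
      exact (hsder x (le_of_lt hx)).deriv
    have hanti : AntitoneOn (fun s => ∑ i, y s i) (Set.Ici 0) :=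
      antitoneOn_of_deriv_nonpos (convex_Ici 0) hScont.continuousOn
        (hSdiff.differentiableOn.mono interior_subset)
        (fun x hx => le_of_eq (hderiv0 x hx))
    have hmono : MonotoneOn (fun s => ∑ i, y s i) (Set.Ici 0) :=
      monotoneOn_of_deriv_nonneg (convex_Ici 0) hScont.continuousOn
        (hSdiff.differentiableOn.mono interior_subset)
        (fun x hx => ge_of_eq (hderiv0 x hx))
    intro t ht
    have h1 := hanti (Set.self_mem_Ici) ht ht
    have h2 := hmono (Set.self_mem_Ici) ht ht
    have := le_antisymm h1 h2
    simp only at this h1 h2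
    rw [← hzero]
    exact le_antisymm h1 h2
  refine ⟨hSconst, ?_⟩
  -- Part 2 : exponential decay
  set N : ℝ → ℝ := fun s => ∑ i, (y s i) ^ 2 with hN
  have hNdiff : Differentiable ℝ N :=
    Differentiable.fun_sum fun i _ => (hdiffc i).pow 2
  have hNnonneg : ∀ s, 0 ≤ N s := fun s =>
    Finset.sum_nonneg fun i _ => sq_nonneg _
  have hNder : ∀ t, 0 ≤ t →
      HasDerivAt N (∑ i, (2:ℕ) * (y t i) ^ 1 * (-((L t) *ᵥ y t)) i) t := by
    intro t ht
    exact HasDerivAt.fun_sum fun i _ => (hcoord t ht i).pow 2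
  set g : ℝ → ℝ := fun s => Real.exp (2 * μ * s) * N s with hg
  have hgdiff : Differentiable ℝ g :=
    ((Real.differentiable_exp.comp ((differentiable_id.const_mul (2*μ)))).mul hNdiff)
  have hgder : ∀ x ∈ interior (Set.Ici (0:ℝ)), deriv g x ≤ 0 := by
    intro x hx
    rw [interior_Ici] at hx
    have hxpos : (0:ℝ) < x := hx
    have hexp : HasDerivAt (fun s => Real.exp (2 * μ * s)) (Real.exp (2 * μ * x) * (2 * μ)) x := by
      have := ((hasDerivAt_id x).const_mul (2*μ)).exp
      simpa using this
    have hN' := hNder x hxpos.le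
    have hgd : HasDerivAt g (Real.exp (2 * μ * x) * (2 * μ) * N x +
        Real.exp (2 * μ * x) * (∑ i, (2:ℕ) * (y x i) ^ 1 * (-((L x) *ᵥ y x)) i)) x :=
      hexp.mul hN'
    rw [hgd.deriv]
    have hkey : μ * N x ≤ ∑ i, y x i * ((L x) *ᵥ y x) i :=
      hconn x (y x) (hSconst x hxpos.le)
    have hsum : ∑ i, (2:ℕ) * (y x i) ^ 1 * (-((L x) *ᵥ y x)) i
        = -(2 * ∑ i, y x i * ((L x) *ᵥ y x) i) := by
      simp only [Pi.neg_apply, pow_one, mul_neg, Finset.sum_neg_distrib, Finset.mul_sum]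
      congr 1
      exact Finset.sum_congr rfl fun i _ => by push_cast; ring
    rw [hsum]
    have h2 : Real.exp (2 * μ * x) * (2 * μ) * N x ≤
        Real.exp (2 * μ * x) * (2 * ∑ i, y x i * ((L x) *ᵥ y x) i) := by
      have : (2 * μ) * N x ≤ 2 * ∑ i, y x i * ((L x) *ᵥ y x) i := by nlinarith
      calc Real.exp (2 * μ * x) * (2 * μ) * N x
          = Real.exp (2 * μ * x) * ((2 * μ) * N x) := by ring
        _ ≤ _ := by
            exact mul_le_mul_of_nonneg_left this (Real.exp_nonneg _)
    linarith [h2, mul_nonneg (Real.exp_nonneg (2*μ*x)) (hNnonneg x)]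
  have hanti : AntitoneOn g (Set.Ici 0) :=
    antitoneOn_of_deriv_nonpos (convex_Ici 0) hgdiff.continuous.continuousOn
      (hgdiff.differentiableOn.mono interior_subset) hgder
  intro t ht
  have hgt : g t ≤ g 0 := hanti Set.self_mem_Ici ht ht
  have hg0 : g 0 = N 0 := by simp [hg]
  have hNt : N t ≤ Real.exp (-(2 * μ * t)) * N 0 := by
    have hexppos : (0:ℝ) < Real.exp (2 * μ * t) := Real.exp_pos _
    rw [hg0] at hgt
    rw [Real.exp_neg, inv_mul_eq_div, le_div_iff₀ hexppos]
    calc N t * Real.exp (2 * μ * t) = g t := by rw [hg]; ring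
      _ ≤ N 0 := hgt
  calc Real.sqrt (N t) ≤ Real.sqrt (Real.exp (-(2 * μ * t)) * N 0) :=
        Real.sqrt_le_sqrt hNt
    _ = Real.exp (-μ * t) * Real.sqrt (N 0) := by
        rw [Real.sqrt_mul (Real.exp_nonneg _)]
        congr 1
        rw [show Real.exp (-(2 * μ * t)) = Real.exp (-μ * t) * Real.exp (-μ * t) by
          rw [← Real.exp_add]; ring_nf]
        exact Real.sqrt_mul_self (Real.exp_nonneg _)
end

section
/- Let n ≥ 1, let L : Matrix (Fin n) (Fin n) ℝ be symmetric with L *ᵥ 𝟙 = 0, and suppose there is μ > 0 with ⟪y, L *ᵥ y⟫ ≥ μ‖y‖² for every y ∈ ℝⁿ satisfying ∑ᵢ yᵢ = 0. Let α > 0 and β > 0, and let x, v : ℝ → (Fin n → ℝ) be differentiable functions satisfying the second-order consensus dynamics x′(t) = v(t) and v′(t) = −α (L *ᵥ x(t)) − β (L *ᵥ v(t)) for all t ≥ 0. Then second-order consensus is achieved: for all i, j, |xᵢ(t) − xⱼ(t)| → 0 and |vᵢ(t) − vⱼ(t)| → 0 as t → ∞. -/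
open Filter Matrix

/-- Bilinear form associated to `L`. -/
noncomputable def auxQF {n : ℕ} (L : Matrix (Fin n) (Fin n) ℝ) (a b : Fin n → ℝ) : ℝ :=
  ∑ i, a i * (L *ᵥ b) i

/-- Mean of a vector. -/
noncomputable def auxMean {n : ℕ} (a : Fin n → ℝ) : ℝ := (∑ j, a j) / n

/-- Disagreement (variance-type) functional. -/
noncomputable def auxS {n : ℕ} (a : Fin n → ℝ) : ℝ := ∑ i, (a i - auxMean a) ^ 2

/-- Cross disagreement functional. -/
noncomputable def auxC {n : ℕ} (a b : Fin n → ℝ) : ℝ :=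
  ∑ i, (a i - auxMean a) * (b i - auxMean b)

lemma aux_cs (a b q r m : ℝ) (ha : 0 < a) (hb : 0 < b) (hq : 0 ≤ q) (hr : 0 ≤ r)
    (hm : m ^ 2 ≤ q * r) : 2 * a * b * m ≤ a ^ 2 * q + b ^ 2 * r := by
  have hw : 0 ≤ a ^ 2 * q + b ^ 2 * r := by positivity
  have h1 : (2 * a * b * m) ^ 2 ≤ (a ^ 2 * q + b ^ 2 * r) ^ 2 := by
    nlinarith [sq_nonneg (a ^ 2 * q - b ^ 2 * r),
      mul_nonneg (mul_nonneg (sq_nonneg a) (sq_nonneg b)) (sub_nonneg.mpr hm)]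
  nlinarith [h1, hw]

/-- Second-order consensus: for a fixed symmetric Laplacian `L` with
`L 𝟙 = 0` and algebraic connectivity at least `μ > 0`, and gains `α, β > 0`, the
dynamics `x' = v`, `v' = -α L x - β L v` achieve consensus in positions and velocities. -/
theorem second_order_consensus
    (n : ℕ) (hn : 1 ≤ n)
    (L : Matrix (Fin n) (Fin n) ℝ)
    (hsymm : L.IsSymm)
    (hones : L *ᵥ (fun _ => (1 : ℝ)) = 0)
    (μ : ℝ) (hμ : 0 < μ)
    (hconn : ∀ y : Fin n → ℝ, (∑ i, y i) = 0 →
      μ * (∑ i, (y i) ^ 2) ≤ ∑ i, y i * (L *ᵥ y) i)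
    (α β : ℝ) (hα : 0 < α) (hβ : 0 < β)
    (x v : ℝ → Fin n → ℝ)
    (hdx : Differentiable ℝ x) (hdv : Differentiable ℝ v)
    (hodex : ∀ t, 0 ≤ t → HasDerivAt x (v t) t)
    (hodev : ∀ t, 0 ≤ t → HasDerivAt v (-(α • (L *ᵥ x t)) - β • (L *ᵥ v t)) t) :
    (∀ i j, Tendsto (fun t => |x t i - x t j|) atTop (nhds 0)) ∧
    (∀ i j, Tendsto (fun t => |v t i - v t j|) atTop (nhds 0)) := by
  have hnn : (n : ℝ) ≠ 0 := Nat.cast_ne_zero.mpr (by omega)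
  -- basic algebra on L
  have hLsym : ∀ a b : Fin n → ℝ,
      ∑ i, a i * (L *ᵥ b) i = ∑ i, b i * (L *ᵥ a) i := by
    intro a b
    show ∑ i, a i * ∑ j, L i j * b j = ∑ i, b i * ∑ j, L i j * a j
    simp only [Finset.mul_sum]
    rw [Finset.sum_comm]
    refine Finset.sum_congr rfl fun j _ => Finset.sum_congr rfl fun i _ => ?_
    rw [show L i j = L j i from (hsymm.apply j i).symm ▸ (hsymm.apply i j) ▸ rfl]
    ring
  have hzero : ∀ z : Fin n → ℝ, ∑ i, (L *ᵥ z) i = 0 := by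
    intro z
    have h := hLsym (fun _ => 1) z
    simp only [one_mul, hones, Pi.zero_apply, mul_zero, Finset.sum_const_zero] at h
    exact h
  have hshift : ∀ (z : Fin n → ℝ) (c : ℝ), (L *ᵥ fun i => z i - c) = L *ᵥ z := by
    intro z c
    have h : (fun i => z i - c) = z - c • (fun _ => (1 : ℝ)) := by
      funext i; simp
    rw [h, Matrix.mulVec_sub, Matrix.mulVec_smul, hones, smul_zero, sub_zero]
  have hsub : ∀ (a : Fin n → ℝ) (c : ℝ) (w : Fin n → ℝ), (∑ i, w i) = 0 →
      ∑ i, (a i - c) * w i = ∑ i, a i * w i := by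
    intro a c w hw
    simp only [sub_mul, Finset.sum_sub_distrib, ← Finset.mul_sum, hw, mul_zero, sub_zero]
  have hsum0 : ∀ a : Fin n → ℝ, ∑ i, (a i - auxMean a) = 0 := by
    intro a
    simp only [Finset.sum_sub_distrib, Finset.sum_const, Finset.card_univ, Fintype.card_fin,
      nsmul_eq_mul, auxMean]
    field_simp
    ring
  have hQS : ∀ a : Fin n → ℝ, μ * auxS a ≤ auxQF L a a := by
    intro a
    have h := hconn (fun i => a i - auxMean a) (hsum0 a)
    rw [hshift a (auxMean a)] at h
    have h2 : ∑ i, (a i - auxMean a) * (L *ᵥ a) i = auxQF L a a :=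
      hsub a (auxMean a) (fun i => (L *ᵥ a) i) (hzero a)
    calc μ * auxS a = μ * ∑ i, (a i - auxMean a) ^ 2 := rfl
      _ ≤ ∑ i, (a i - auxMean a) * (L *ᵥ a) i := h
      _ = auxQF L a a := h2
  have hS0 : ∀ a : Fin n → ℝ, 0 ≤ auxS a := by
    intro a; exact Finset.sum_nonneg fun i _ => sq_nonneg _
  have hQ0 : ∀ a : Fin n → ℝ, 0 ≤ auxQF L a a := by
    intro a
    exact le_trans (mul_nonneg hμ.le (hS0 a)) (hQS a)
  have hbil : ∀ (a b : Fin n → ℝ) (s : ℝ),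
      auxQF L (fun i => a i + s * b i) (fun i => a i + s * b i)
        = auxQF L b b * (s * s) + (2 * auxQF L a b) * s + auxQF L a a := by
    intro a b s
    have hv : (L *ᵥ fun i => a i + s * b i) = fun i => (L *ᵥ a) i + s * (L *ᵥ b) i := by
      have h : (fun i => a i + s * b i) = a + s • b := by funext i; simp
      rw [h, Matrix.mulVec_add, Matrix.mulVec_smul]
      funext i; simp
    show (∑ i, (a i + s * b i) * (L *ᵥ fun i => a i + s * b i) i) = _
    rw [hv]
    have hterm : ∀ i : Fin n, (a i + s * b i) * ((L *ᵥ a) i + s * (L *ᵥ b) i)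
        = a i * (L *ᵥ a) i + s * (a i * (L *ᵥ b) i) + s * (b i * (L *ᵥ a) i)
          + (s * s) * (b i * (L *ᵥ b) i) := fun i => by ring
    rw [Finset.sum_congr rfl fun i _ => hterm i]
    simp only [Finset.sum_add_distrib, ← Finset.mul_sum]
    rw [hLsym b a]
    show _ = (∑ i, b i * (L *ᵥ b) i) * (s * s) + (2 * ∑ i, a i * (L *ᵥ b) i) * s
      + ∑ i, a i * (L *ᵥ a) i
    ring
  have hCS : ∀ a b : Fin n → ℝ, (auxQF L a b) ^ 2 ≤ auxQF L a a * auxQF L b b := by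
    intro a b
    have key : ∀ s : ℝ,
        0 ≤ auxQF L b b * (s * s) + (2 * auxQF L a b) * s + auxQF L a a := by
      intro s
      have h0 := hQ0 (fun i => a i + s * b i)
      rw [hbil a b s] at h0
      exact h0
    have hd := discrim_le_zero key
    rw [discrim] at hd
    nlinarith [hd]
  have hCb : ∀ a b : Fin n → ℝ,
      2 * auxC a b ≤ auxS a + auxS b ∧ -(auxS a + auxS b) ≤ 2 * auxC a b := by
    intro a b
    constructor
    · show 2 * ∑ i, (a i - auxMean a) * (b i - auxMean b) ≤ _
      rw [Finset.mul_sum]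
      show _ ≤ (∑ i, (a i - auxMean a) ^ 2) + ∑ i, (b i - auxMean b) ^ 2
      rw [← Finset.sum_add_distrib]
      exact Finset.sum_le_sum fun i _ => by
        nlinarith [sq_nonneg ((a i - auxMean a) - (b i - auxMean b))]
    · show -((∑ i, (a i - auxMean a) ^ 2) + ∑ i, (b i - auxMean b) ^ 2)
        ≤ 2 * ∑ i, (a i - auxMean a) * (b i - auxMean b)
      rw [Finset.mul_sum, ← Finset.sum_add_distrib, ← Finset.sum_neg_distrib]
      exact Finset.sum_le_sum fun i _ => by
        nlinarith [sq_nonneg ((a i - auxMean a) + (b i - auxMean b))]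
  have hdiff_sq : ∀ (a : Fin n → ℝ) (i j : Fin n), (a i - a j) ^ 2 ≤ 4 * auxS a := by
    intro a i j
    have hi : (a i - auxMean a) ^ 2 ≤ auxS a :=
      Finset.single_le_sum (f := fun k => (a k - auxMean a) ^ 2)
        (fun k _ => sq_nonneg _) (Finset.mem_univ i)
    have hj : (a j - auxMean a) ^ 2 ≤ auxS a :=
      Finset.single_le_sum (f := fun k => (a k - auxMean a) ^ 2)
        (fun k _ => sq_nonneg _) (Finset.mem_univ j)
    nlinarith [sq_nonneg ((a i - auxMean a) + (a j - auxMean a))]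
  -- component derivatives
  have hx' : ∀ t, 0 ≤ t → ∀ i : Fin n, HasDerivAt (fun s => x s i) (v t i) t :=
    fun t ht i => hasDerivAt_pi.mp (hodex t ht) i
  have hv' : ∀ t, 0 ≤ t → ∀ i : Fin n,
      HasDerivAt (fun s => v s i) (-(α * (L *ᵥ x t) i) - β * (L *ᵥ v t) i) t := by
    intro t ht i
    have h := hasDerivAt_pi.mp (hodev t ht) i
    simpa using h
  have hLx' : ∀ t, 0 ≤ t → ∀ i : Fin n,
      HasDerivAt (fun s => (L *ᵥ x s) i) ((L *ᵥ v t) i) t := by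
    intro t ht i
    show HasDerivAt (fun s => ∑ j, L i j * x s j) (∑ j, L i j * v t j) t
    exact HasDerivAt.fun_sum fun j _ => HasDerivAt.const_mul (L i j) (hx' t ht j)
  have hmx' : ∀ t, 0 ≤ t → HasDerivAt (fun s => auxMean (x s)) (auxMean (v t)) t := by
    intro t ht
    show HasDerivAt (fun s => (∑ j, x s j) / (n : ℝ)) ((∑ j, v t j) / (n : ℝ)) t
    exact (HasDerivAt.fun_sum fun j _ => hx' t ht j).div_const _
  have hu0 : ∀ t, ∑ i, (-(α * (L *ᵥ x t) i) - β * (L *ᵥ v t) i) = 0 := by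
    intro t
    simp only [Finset.sum_sub_distrib, Finset.sum_neg_distrib, ← Finset.mul_sum,
      hzero (x t), hzero (v t), mul_zero, neg_zero, sub_zero]
  have hmv' : ∀ t, 0 ≤ t → HasDerivAt (fun s => auxMean (v s)) 0 t := by
    intro t ht
    have h : HasDerivAt (fun s => (∑ j, v s j) / (n : ℝ))
        ((∑ j, (-(α * (L *ᵥ x t) j) - β * (L *ᵥ v t) j)) / (n : ℝ)) t :=
      (HasDerivAt.fun_sum fun j _ => hv' t ht j).div_const _
    rw [hu0 t, zero_div] at h
    exact h
  -- the gains
  have hden : (0:ℝ) < β ^ 2 * μ + 4 * α := by positivity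
  set ε : ℝ := min (min (1/2) (μ * α / 2)) (α * β * μ / (β ^ 2 * μ + 4 * α)) with hε_def
  have hε0 : 0 < ε :=
    lt_min (lt_min (by norm_num) (by positivity)) (by positivity)
  have hεhalf : ε ≤ 1/2 := le_trans (min_le_left _ _) (min_le_left _ _)
  have hεμα : 2 * ε ≤ μ * α := by
    have h : ε ≤ μ * α / 2 := by
      rw [hε_def]
      exact le_trans (min_le_left _ _) (min_le_right _ _)
    linarith
  have hε3 : ε * (β ^ 2 * μ + 4 * α) ≤ α * β * μ := by
    have h := min_le_right (min (1/2) (μ * α / 2)) (α * β * μ / (β ^ 2 * μ + 4 * α))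
    rw [le_div_iff₀ hden] at h
    exact h
  have hεβ2 : ε * β ^ 2 ≤ α * β := by
    have h1 : ε * β ^ 2 * μ ≤ α * β * μ := by nlinarith [hε3, mul_pos hε0 hα]
    exact le_of_mul_le_mul_right (by linarith) hμ
  have h4ε : 4 * ε ≤ β * μ := by
    have h1 : 4 * ε * α ≤ (β * μ) * α := by
      nlinarith [hε3, mul_nonneg hε0.le (mul_nonneg (sq_nonneg β) hμ.le)]
    exact le_of_mul_le_mul_right h1 hα
  clear_value ε
  set γ : ℝ := 2/3 * ε with hγ_def
  have hγ0 : 0 < γ := by rw [hγ_def]; linarith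
  have h32 : 3 * γ = 2 * ε := by rw [hγ_def]; ring
  have hWc : 2 * ε + γ + ε * γ ≤ β * μ := by
    have hεγ : ε * γ ≤ (1/2) * γ := mul_le_mul_of_nonneg_right hεhalf hγ0.le
    linarith [h4ε, hε0]
  clear_value γ
  clear hε_def hγ_def hε3 hden
  -- Lyapunov function and its derivative
  set V : ℝ → ℝ := fun t => α * auxQF L (x t) (x t) + auxS (v t)
    + 2 * ε * auxC (x t) (v t) with hV_def
  set D : ℝ → ℝ := fun t => -(2*β) * auxQF L (v t) (v t) + 2*ε*auxS (v t)
    - 2*ε*α*auxQF L (x t) (x t) - 2*ε*β*auxQF L (v t) (x t) with hD_def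
  clear_value V D
  have hQx' : ∀ t, 0 ≤ t →
      HasDerivAt (fun s => auxQF L (x s) (x s)) (2 * auxQF L (v t) (x t)) t := by
    intro t ht
    have h : HasDerivAt (fun s => ∑ i, x s i * (L *ᵥ x s) i)
        (∑ i, (v t i * (L *ᵥ x t) i + x t i * (L *ᵥ v t) i)) t :=
      HasDerivAt.fun_sum fun i _ => (hx' t ht i).mul (hLx' t ht i)
    have hval : ∑ i, (v t i * (L *ᵥ x t) i + x t i * (L *ᵥ v t) i)
        = 2 * auxQF L (v t) (x t) := by
      rw [Finset.sum_add_distrib, hLsym (x t) (v t)]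
      show (∑ i, v t i * (L *ᵥ x t) i) + (∑ i, v t i * (L *ᵥ x t) i)
        = 2 * ∑ i, v t i * (L *ᵥ x t) i
      ring
    rw [← hval]
    exact h
  have hlin : ∀ t, ∀ a : Fin n → ℝ,
      ∑ i, a i * (-(α * (L *ᵥ x t) i) - β * (L *ᵥ v t) i)
        = -(α * ∑ i, a i * (L *ᵥ x t) i) - β * ∑ i, a i * (L *ᵥ v t) i := by
    intro t a
    rw [Finset.sum_congr rfl (fun i _ => show a i * (-(α * (L *ᵥ x t) i) - β * (L *ᵥ v t) i)
      = -(α * (a i * (L *ᵥ x t) i)) - β * (a i * (L *ᵥ v t) i) from by ring)]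
    rw [Finset.sum_sub_distrib, Finset.sum_neg_distrib, ← Finset.mul_sum, ← Finset.mul_sum]
  have hW' : ∀ t, 0 ≤ t → HasDerivAt (fun s => auxS (v s))
      (-(2*α) * auxQF L (v t) (x t) - (2*β) * auxQF L (v t) (v t)) t := by
    intro t ht
    have h : HasDerivAt (fun s => ∑ i, (v s i - auxMean (v s)) ^ 2)
        (∑ i, ((2:ℕ) : ℝ) * (v t i - auxMean (v t)) ^ (2-1)
          * ((-(α * (L *ᵥ x t) i) - β * (L *ᵥ v t) i) - 0)) t :=
      HasDerivAt.fun_sum fun i _ => ((hv' t ht i).sub (hmv' t ht)).pow 2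
    have hval : ∑ i, ((2:ℕ) : ℝ) * (v t i - auxMean (v t)) ^ (2-1)
          * ((-(α * (L *ᵥ x t) i) - β * (L *ᵥ v t) i) - 0)
        = -(2*α) * auxQF L (v t) (x t) - (2*β) * auxQF L (v t) (v t) := by
      have h1 : ∑ i, (v t i - auxMean (v t)) * (-(α * (L *ᵥ x t) i) - β * (L *ᵥ v t) i)
          = ∑ i, v t i * (-(α * (L *ᵥ x t) i) - β * (L *ᵥ v t) i) :=
        hsub (v t) (auxMean (v t)) _ (hu0 t)
      calc ∑ i, ((2:ℕ) : ℝ) * (v t i - auxMean (v t)) ^ (2-1)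
            * ((-(α * (L *ᵥ x t) i) - β * (L *ᵥ v t) i) - 0)
          = 2 * ∑ i, (v t i - auxMean (v t)) * (-(α * (L *ᵥ x t) i) - β * (L *ᵥ v t) i) := by
            rw [Finset.mul_sum]
            exact Finset.sum_congr rfl fun i _ => by push_cast; ring
        _ = 2 * ∑ i, v t i * (-(α * (L *ᵥ x t) i) - β * (L *ᵥ v t) i) := by rw [h1]
        _ = -(2*α) * auxQF L (v t) (x t) - (2*β) * auxQF L (v t) (v t) := by
            rw [hlin t (v t)]
            show _ = -(2*α) * (∑ i, v t i * (L *ᵥ x t) i) - (2*β) * (∑ i, v t i * (L *ᵥ v t) i)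
            ring
    rw [← hval]
    exact h
  have hC' : ∀ t, 0 ≤ t → HasDerivAt (fun s => auxC (x s) (v s))
      (auxS (v t) - α * auxQF L (x t) (x t) - β * auxQF L (v t) (x t)) t := by
    intro t ht
    have h : HasDerivAt (fun s => ∑ i, (x s i - auxMean (x s)) * (v s i - auxMean (v s)))
        (∑ i, ((v t i - auxMean (v t)) * (v t i - auxMean (v t))
          + (x t i - auxMean (x t)) * ((-(α * (L *ᵥ x t) i) - β * (L *ᵥ v t) i) - 0))) t :=
      HasDerivAt.fun_sum fun i _ =>
        ((hx' t ht i).sub (hmx' t ht)).mul ((hv' t ht i).sub (hmv' t ht))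
    have hval : ∑ i, ((v t i - auxMean (v t)) * (v t i - auxMean (v t))
          + (x t i - auxMean (x t)) * ((-(α * (L *ᵥ x t) i) - β * (L *ᵥ v t) i) - 0))
        = auxS (v t) - α * auxQF L (x t) (x t) - β * auxQF L (v t) (x t) := by
      rw [Finset.sum_add_distrib]
      have e1 : ∑ i, (v t i - auxMean (v t)) * (v t i - auxMean (v t)) = auxS (v t) := by
        exact Finset.sum_congr rfl fun i _ => by rw [← sq]
      have e2 : ∑ i, (x t i - auxMean (x t)) * ((-(α * (L *ᵥ x t) i) - β * (L *ᵥ v t) i) - 0)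
          = -(α * auxQF L (x t) (x t)) - β * auxQF L (v t) (x t) := by
        calc ∑ i, (x t i - auxMean (x t)) * ((-(α * (L *ᵥ x t) i) - β * (L *ᵥ v t) i) - 0)
            = ∑ i, (x t i - auxMean (x t)) * (-(α * (L *ᵥ x t) i) - β * (L *ᵥ v t) i) := by
              exact Finset.sum_congr rfl fun i _ => by rw [sub_zero]
          _ = ∑ i, x t i * (-(α * (L *ᵥ x t) i) - β * (L *ᵥ v t) i) :=
              hsub (x t) (auxMean (x t)) _ (hu0 t)
          _ = -(α * ∑ i, x t i * (L *ᵥ x t) i) - β * ∑ i, x t i * (L *ᵥ v t) i := hlin t (x t)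
          _ = -(α * auxQF L (x t) (x t)) - β * auxQF L (v t) (x t) := by
              rw [hLsym (x t) (v t)]
              rfl
      rw [e1, e2]
      ring
    rw [← hval]
    exact h
  have hV' : ∀ t, 0 ≤ t → HasDerivAt V (D t) t := by
    intro t ht
    have h := ((HasDerivAt.const_mul α (hQx' t ht)).add (hW' t ht)).add
      (HasDerivAt.const_mul (2*ε) (hC' t ht))
    have hval : α * (2 * auxQF L (v t) (x t))
        + (-(2*α) * auxQF L (v t) (x t) - (2*β) * auxQF L (v t) (v t))
        + 2*ε * (auxS (v t) - α * auxQF L (x t) (x t) - β * auxQF L (v t) (x t)) = D t := by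
      rw [hD_def]
      ring
    rw [hV_def, ← hval]
    exact h
  -- the key differential inequality
  have hkey : ∀ t, D t + γ * V t ≤ 0 := by
    intro t
    have hq0 := hQ0 (x t)
    have hr0 := hQ0 (v t)
    have hs0 := hS0 (x t)
    have hw0 := hS0 (v t)
    have f2 : μ * auxS (v t) ≤ auxQF L (v t) (v t) := hQS (v t)
    have f3 : μ * auxS (x t) ≤ auxQF L (x t) (x t) := hQS (x t)
    have hm2 : (auxQF L (v t) (x t)) ^ 2 ≤ auxQF L (v t) (v t) * auxQF L (x t) (x t) :=
      hCS (v t) (x t)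
    have f5 := (hCb (x t) (v t)).1
    have A1 : ε * (2*α*β*(-(auxQF L (v t) (x t))))
        ≤ ε * (α^2 * auxQF L (x t) (x t) + β^2 * auxQF L (v t) (v t)) :=
      mul_le_mul_of_nonneg_left
        (aux_cs α β (auxQF L (x t) (x t)) (auxQF L (v t) (v t)) (-(auxQF L (v t) (x t)))
          hα hβ hq0 hr0 (by rw [neg_sq]; linarith [hm2])) hε0.le
    have A2 : (ε*γ*α) * (2 * auxC (x t) (v t)) ≤ (ε*γ*α) * (auxS (x t) + auxS (v t)) :=
      mul_le_mul_of_nonneg_left f5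
        (mul_nonneg (mul_nonneg hε0.le hγ0.le) hα.le)
    have A3 : (2*ε) * (γ*α*auxS (x t)) ≤ (μ*α) * (γ*α*auxS (x t)) :=
      mul_le_mul_of_nonneg_right hεμα
        (mul_nonneg (mul_nonneg hγ0.le hα.le) hs0)
    have A4 : (γ*α^2) * (μ * auxS (x t)) ≤ (γ*α^2) * auxQF L (x t) (x t) :=
      mul_le_mul_of_nonneg_left f3 (mul_nonneg hγ0.le (sq_nonneg α))
    have A5 : (α*β) * (μ * auxS (v t)) ≤ (α*β) * auxQF L (v t) (v t) :=
      mul_le_mul_of_nonneg_left f2 (mul_nonneg hα.le hβ.le)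
    have A6 : (ε*β^2) * auxQF L (v t) (v t) ≤ (α*β) * auxQF L (v t) (v t) :=
      mul_le_mul_of_nonneg_right hεβ2 hr0
    have A7 : (2*ε + γ + ε*γ) * (α * auxS (v t)) ≤ (β*μ) * (α * auxS (v t)) :=
      mul_le_mul_of_nonneg_right hWc (mul_nonneg hα.le hw0)
    have A8 : (3*γ) * (α^2 * auxQF L (x t) (x t)) = (2*ε) * (α^2 * auxQF L (x t) (x t)) := by
      rw [h32]
    have hG : α * (D t + γ * V t) ≤ 0 := by
      simp only [hD_def, hV_def]
      linarith [A1, A2, A3, A4, A5, A6, A7, A8.le, A8.ge, hq0, hr0, hs0, hw0]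
    by_contra hcon
    push_neg at hcon
    exact absurd hG (not_le.mpr (mul_pos hα hcon))
  -- continuity of V
  have hcx : ∀ i : Fin n, Continuous fun t => x t i :=
    fun i => (continuous_apply i).comp hdx.continuous
  have hcv : ∀ i : Fin n, Continuous fun t => v t i :=
    fun i => (continuous_apply i).comp hdv.continuous
  have hcLx : ∀ i : Fin n, Continuous fun t => (L *ᵥ x t) i := by
    intro i
    show Continuous fun t => ∑ j, L i j * x t j
    exact continuous_finset_sum _ fun j _ => continuous_const.mul (hcx j)
  have hcmx : Continuous fun t => auxMean (x t) := by
    show Continuous fun t => (∑ j, x t j) / (n : ℝ)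
    exact (continuous_finset_sum _ fun j _ => hcx j).div_const _
  have hcmv : Continuous fun t => auxMean (v t) := by
    show Continuous fun t => (∑ j, v t j) / (n : ℝ)
    exact (continuous_finset_sum _ fun j _ => hcv j).div_const _
  have hcV : Continuous V := by
    rw [hV_def]
    refine ((continuous_const.mul ?_).add ?_).add (continuous_const.mul ?_)
    · show Continuous fun t => ∑ i, x t i * (L *ᵥ x t) i
      exact continuous_finset_sum _ fun i _ => (hcx i).mul (hcLx i)
    · show Continuous fun t => ∑ i, (v t i - auxMean (v t)) ^ 2
      exact continuous_finset_sum _ fun i _ => ((hcv i).sub hcmv).pow 2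
    · show Continuous fun t => ∑ i, (x t i - auxMean (x t)) * (v t i - auxMean (v t))
      exact continuous_finset_sum _ fun i _ => ((hcx i).sub hcmx).mul ((hcv i).sub hcmv)
  -- the Lyapunov function decays exponentially
  have hgder : ∀ t, 0 ≤ t → HasDerivAt (fun s => V s * Real.exp (γ * s))
      (D t * Real.exp (γ * t) + V t * (Real.exp (γ * t) * (γ * 1))) t := by
    intro t ht
    exact (hV' t ht).mul (((hasDerivAt_id t).const_mul γ).exp)
  have hanti : AntitoneOn (fun s => V s * Real.exp (γ * s)) (Set.Ici 0) := by
    apply antitoneOn_of_deriv_nonpos (convex_Ici 0)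
    · exact (hcV.mul (Real.continuous_exp.comp (continuous_const.mul continuous_id))).continuousOn
    · intro t ht
      rw [interior_Ici] at ht
      exact (hgder t (le_of_lt ht)).differentiableAt.differentiableWithinAt
    · intro t ht
      rw [interior_Ici] at ht
      rw [(hgder t ht.le).deriv]
      have heq : D t * Real.exp (γ * t) + V t * (Real.exp (γ * t) * (γ * 1))
          = (D t + γ * V t) * Real.exp (γ * t) := by ring
      rw [heq]
      exact mul_nonpos_iff.mpr (Or.inr ⟨hkey t, (Real.exp_pos _).le⟩)
  have hVdecay : ∀ t, 0 ≤ t → V t ≤ V 0 * Real.exp (-(γ * t)) := by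
    intro t ht
    have h := hanti Set.self_mem_Ici ht ht
    have h0 : V 0 * Real.exp (γ * 0) = V 0 := by
      rw [mul_zero, Real.exp_zero, mul_one]
    calc V t = V t * Real.exp (γ * t) * Real.exp (-(γ * t)) := by
          rw [mul_assoc, ← Real.exp_add, add_neg_cancel, Real.exp_zero, mul_one]
      _ ≤ (V 0 * Real.exp (γ * 0)) * Real.exp (-(γ * t)) :=
          mul_le_mul_of_nonneg_right h (Real.exp_pos _).le
      _ = V 0 * Real.exp (-(γ * t)) := by rw [h0]
  -- lower bound on V
  have hVlow : ∀ t, α * μ * auxS (x t) + auxS (v t) ≤ 2 * V t := by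
    intro t
    have B1 : (2*ε) * auxS (x t) ≤ (μ*α) * auxS (x t) :=
      mul_le_mul_of_nonneg_right hεμα (hS0 _)
    have B2 : ε * auxS (v t) ≤ (1/2) * auxS (v t) :=
      mul_le_mul_of_nonneg_right hεhalf (hS0 _)
    have B3 : α * (μ * auxS (x t)) ≤ α * auxQF L (x t) (x t) :=
      mul_le_mul_of_nonneg_left (hQS (x t)) hα.le
    have B4 : ε * (-(auxS (x t) + auxS (v t))) ≤ ε * (2 * auxC (x t) (v t)) :=
      mul_le_mul_of_nonneg_left (hCb (x t) (v t)).2 hε0.le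
    simp only [hV_def]
    linarith [B1, B2, B3, B4]
  -- generic conclusion
  have hgen : ∀ (y : ℝ → Fin n → ℝ) (K : ℝ), 0 ≤ K →
      (∀ t, 0 ≤ t → auxS (y t) ≤ K * V t) →
      ∀ i j, Tendsto (fun t => |y t i - y t j|) atTop (nhds 0) := by
    intro y K hK hb i j
    have hexp0 : Tendsto (fun t : ℝ => Real.exp (-(γ * t))) atTop (nhds 0) :=
      Real.tendsto_exp_neg_atTop_nhds_zero.comp (Tendsto.const_mul_atTop hγ0 tendsto_id)
    have hlim : Tendsto (fun t => (4 * K * V 0) * Real.exp (-(γ * t))) atTop (nhds 0) := by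
      have h := hexp0.const_mul (4 * K * V 0)
      simpa using h
    have hsq : Tendsto (fun t => (y t i - y t j) ^ 2) atTop (nhds 0) := by
      apply squeeze_zero' (Eventually.of_forall fun t => sq_nonneg _) _ hlim
      filter_upwards [eventually_ge_atTop (0:ℝ)] with t ht
      have h1 : (y t i - y t j) ^ 2 ≤ 4 * auxS (y t) := hdiff_sq (y t) i j
      have h2 : auxS (y t) ≤ K * V t := hb t ht
      have h3 : K * V t ≤ K * (V 0 * Real.exp (-(γ * t))) :=
        mul_le_mul_of_nonneg_left (hVdecay t ht) hK
      calc (y t i - y t j) ^ 2 ≤ 4 * auxS (y t) := h1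
        _ ≤ 4 * (K * V t) := by linarith
        _ ≤ 4 * (K * (V 0 * Real.exp (-(γ * t)))) := by linarith
        _ = (4 * K * V 0) * Real.exp (-(γ * t)) := by ring
    have habs : Tendsto (fun t => Real.sqrt ((y t i - y t j) ^ 2)) atTop (nhds 0) := by
      have h := (Real.continuous_sqrt.tendsto 0).comp hsq
      simpa [Function.comp_def] using h
    simpa [Real.sqrt_sq_eq_abs] using habs
  constructor
  · intro i j
    refine hgen x (2 / (α * μ)) (div_nonneg (by norm_num) (mul_pos hα hμ).le) ?_ i j
    intro t ht
    rw [div_mul_eq_mul_div, le_div_iff₀ (mul_pos hα hμ)]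
    have h := hVlow t
    have hw := hS0 (v t)
    linarith
  · intro i j
    refine hgen v 2 (by norm_num) ?_ i j
    intro t ht
    have h := hVlow t
    have hs := hS0 (x t)
    have hαμs : 0 ≤ α * μ * auxS (x t) :=
      mul_nonneg (mul_nonneg hα.le hμ.le) hs
    linarith
end

section
/- Let n ≥ 1, fix a root r : Fin n, and let z : Fin n → Fin n → ℝ be symmetric with values in {0, 1} and z i i = 0. Suppose there exists f : Fin n → Fin n → ℝ with: 0 ≤ f i j ≤ (n − 1) · z i j for all i, j; ∑_j f j k − ∑_j f k j = 1 for every node k ≠ r; and ∑_j f r j − ∑_j f j r = n − 1. Then the simple graph on Fin n whose adjacency relation is {(i, j) : i ≠ j ∧ z i j = 1} is connected (every two nodes are joined by a path in this graph). -/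
/-- A feasible flow for the flow-based formulation certifies connectivity:
if binary symmetric edge indicators `z` admit flows `f` with capacity
`0 ≤ f i j ≤ (n-1) z i j`, unit net inflow at every non-root node, and net outflow
`n - 1` at the root `r`, then the graph whose edges are `{(i,j) : i ≠ j ∧ z i j = 1}`
is connected. -/
theorem flow_certifies_connectivity
    (n : ℕ) (hn : 1 ≤ n) (r : Fin n)
    (z : Fin n → Fin n → ℝ)
    (hzsymm : ∀ i j, z i j = z j i)
    (hz01 : ∀ i j, z i j = 0 ∨ z i j = 1)
    (hzdiag : ∀ i, z i i = 0)
    (f : Fin n → Fin n → ℝ)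
    (hcap : ∀ i j, 0 ≤ f i j ∧ f i j ≤ ((n : ℝ) - 1) * z i j)
    (hcons : ∀ k : Fin n, k ≠ r → (∑ j, f j k) - (∑ j, f k j) = 1)
    (hroot : (∑ j, f r j) - (∑ j, f j r) = (n : ℝ) - 1)
    (G : SimpleGraph (Fin n))
    (hG : ∀ i j, G.Adj i j ↔ i ≠ j ∧ z i j = 1) :
    G.Connected := by
  classical
  -- Key claim: every vertex is reachable from r.
  have key : ∀ k : Fin n, G.Reachable r k := by
    by_contra hcon
    push_neg at hcon
    set S : Finset (Fin n) := Finset.univ.filter (fun k => ¬ G.Reachable r k) with hS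
    have hSne : S.Nonempty := by
      obtain ⟨k, hk⟩ := hcon
      exact ⟨k, by simp [hS, hk]⟩
    have hrS : r ∉ S := by
      simp only [hS, Finset.mem_filter]
      exact fun h => h.2 (SimpleGraph.Reachable.refl r)
    have hmemS : ∀ k, k ∈ S ↔ ¬ G.Reachable r k := by intro k; simp [hS]
    -- cross edges carry no flow
    have hcross : ∀ j k, j ∉ S → k ∈ S → f j k = 0 := by
      intro j k hj hk
      have hrj : G.Reachable r j := by
        by_contra h; exact hj ((hmemS j).2 h)
      have hrk : ¬ G.Reachable r k := (hmemS k).1 hk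
      have hjk : j ≠ k := by rintro rfl; exact hrk hrj
      have hz : z j k = 0 := by
        rcases hz01 j k with h | h
        · exact h
        · exact absurd (hrj.trans ((hG j k).2 ⟨hjk, h⟩).reachable) hrk
      have h1 := (hcap j k).1
      have h2 := (hcap j k).2
      rw [hz, mul_zero] at h2
      linarith
    -- sum conservation over S
    have hsum : ∑ k ∈ S, ((∑ j, f j k) - (∑ j, f k j)) = (S.card : ℝ) := by
      rw [Finset.sum_congr rfl (fun k hk => hcons k (by rintro rfl; exact hrS hk))]
      simp
    have hsplit : ∀ k, (∑ j, f j k) = (∑ j ∈ S, f j k) + (∑ j ∈ Sᶜ, f j k) := by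
      intro k; rw [Finset.sum_add_sum_compl]
    have hsplit' : ∀ k, (∑ j, f k j) = (∑ j ∈ S, f k j) + (∑ j ∈ Sᶜ, f k j) := by
      intro k; rw [Finset.sum_add_sum_compl]
    have hin0 : ∑ k ∈ S, ∑ j ∈ Sᶜ, f j k = 0 := by
      apply Finset.sum_eq_zero; intro k hk
      apply Finset.sum_eq_zero; intro j hj
      exact hcross j k (Finset.mem_compl.1 hj) hk
    have hA : ∑ k ∈ S, ∑ j ∈ S, f j k = ∑ k ∈ S, ∑ j ∈ S, f k j :=
      Finset.sum_comm
    have hBnn : 0 ≤ ∑ k ∈ S, ∑ j ∈ Sᶜ, f k j := by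
      apply Finset.sum_nonneg; intro k _
      exact Finset.sum_nonneg fun j _ => (hcap k j).1
    have hcard : (1 : ℝ) ≤ (S.card : ℝ) := by
      exact_mod_cast Nat.one_le_iff_ne_zero.2 (Finset.card_ne_zero_of_mem hSne.choose_spec)
    have : (S.card : ℝ) = (∑ k ∈ S, ∑ j ∈ S, f j k) + 0
        - ((∑ k ∈ S, ∑ j ∈ S, f k j) + ∑ k ∈ S, ∑ j ∈ Sᶜ, f k j) := by
      rw [← hin0, ← hsum, Finset.sum_sub_distrib, ← Finset.sum_add_distrib,
        ← Finset.sum_add_distrib]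
      rw [Finset.sum_congr rfl (fun k _ => hsplit k),
        Finset.sum_congr rfl (fun k _ => hsplit' k)]
    rw [hA] at this
    linarith
  rw [SimpleGraph.connected_iff]
  refine ⟨fun u v => (key u).symm.trans (key v), ⟨r⟩⟩
end

section
/- Let N ≥ 1, let H : Matrix (Fin N) (Fin N) ℂ be Hermitian, let λmin denote its smallest eigenvalue, and let ψ₀ ∈ ℂ^N be a vector whose orthogonal projection onto the λmin-eigenspace of H is nonzero. For τ ∈ ℝ let ψ_τ = exp(−τ • H) *ᵥ ψ₀ (matrix exponential applied to ψ₀); note ψ_τ ≠ 0 for all τ. Then the energy (Rayleigh quotient) of the evolved state converges to the ground energy: ⟪ψ_τ, H *ᵥ ψ_τ⟫ / ‖ψ_τ‖² → λmin as τ → ∞. -/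
open Filter Matrix

lemma exp_smul_mulVec_eigen (N : ℕ) (H : Matrix (Fin N) (Fin N) ℂ) (hH : H.IsHermitian)
    (z : ℂ) (j : Fin N) :
    (NormedSpace.exp (z • H)) *ᵥ ⇑(hH.eigenvectorBasis j)
      = Complex.exp (z * (hH.eigenvalues j : ℂ)) • ⇑(hH.eigenvectorBasis j) := by
  set U : Matrix (Fin N) (Fin N) ℂ := (hH.eigenvectorUnitary : Matrix (Fin N) (Fin N) ℂ) with hU
  have hsu : star U * U = 1 := Unitary.coe_star_mul_self hH.eigenvectorUnitary
  have hUunit : IsUnit U := ⟨Unitary.toUnits hH.eigenvectorUnitary, rfl⟩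
  have hUinv : U⁻¹ = star U := Matrix.inv_eq_left_inv hsu
  have hconj : z • H = U * (z • diagonal (RCLike.ofReal ∘ hH.eigenvalues)) * U⁻¹ := by
    rw [hUinv]
    conv_lhs => rw [hH.spectral_theorem, Unitary.conjStarAlgAut_apply]
    rw [Matrix.mul_smul, Matrix.smul_mul]
  have hdiag : z • diagonal (RCLike.ofReal ∘ hH.eigenvalues)
      = diagonal (fun i => z * (hH.eigenvalues i : ℂ)) := by
    rw [← Matrix.diagonal_smul]
    congr 1
  have hexp : NormedSpace.exp (z • H)
      = U * diagonal (fun i => Complex.exp (z * (hH.eigenvalues i : ℂ))) * star U := by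
    have hfn : NormedSpace.exp (fun i => z * (hH.eigenvalues i : ℂ))
        = fun i => Complex.exp (z * (hH.eigenvalues i : ℂ)) := by
      funext i
      rw [Pi.coe_exp, Complex.exp_eq_exp_ℂ]
    rw [hconj, Matrix.exp_conj U _ hUunit, hUinv, hdiag, Matrix.exp_diagonal, hfn]
  rw [hexp, ← Matrix.mulVec_mulVec, ← Matrix.mulVec_mulVec,
    hH.star_eigenvectorUnitary_mulVec, Matrix.diagonal_mulVec_single, mul_one]
  rw [show (Pi.single j (Complex.exp (z * (hH.eigenvalues j : ℂ))) : Fin N → ℂ)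
      = Complex.exp (z * (hH.eigenvalues j : ℂ)) • (Pi.single j 1 : Fin N → ℂ) by
    rw [← Pi.single_smul, smul_eq_mul, mul_one]]
  rw [Matrix.mulVec_smul, hH.eigenvectorUnitary_mulVec]

lemma toEuclideanLin_eigen (N : ℕ) (M : Matrix (Fin N) (Fin N) ℂ)
    (v : EuclideanSpace ℂ (Fin N)) (z : ℂ) (h : M *ᵥ ⇑v = z • ⇑v) :
    Matrix.toEuclideanLin M v = z • v := by
  rw [Matrix.toEuclideanLin_apply]
  apply (WithLp.equiv 2 (Fin N → ℂ)).symm_apply_eq.mpr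
  rw [show (WithLp.equiv 2 (Fin N → ℂ)) (z • v) = z • (WithLp.equiv 2 (Fin N → ℂ)) v from
    rfl]
  exact h

/-- Imaginary-time evolution converges to the ground energy: for a
Hermitian matrix `H` with smallest eigenvalue `λmin`, and an initial state `ψ₀` whose
orthogonal projection onto the `λmin`-eigenspace is nonzero, the evolved states
`ψ_τ = exp(-τ H) ψ₀` are nonzero and their Rayleigh quotients converge to `λmin`. -/
theorem qite_converges_to_ground_energy
    (N : ℕ) (hN : 1 ≤ N)
    (H : Matrix (Fin N) (Fin N) ℂ) (hH : H.IsHermitian)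
    (lammin : ℝ) (hlam : lammin = ⨅ i, hH.eigenvalues i)
    (ψ₀ : EuclideanSpace ℂ (Fin N))
    (hproj : (Submodule.orthogonalProjectionOnto
        (Module.End.eigenspace (Matrix.toEuclideanLin H) (lammin : ℂ)) ψ₀ : EuclideanSpace ℂ (Fin N)) ≠ 0)
    (ψ : ℝ → EuclideanSpace ℂ (Fin N))
    (hψ : ∀ τ : ℝ, ψ τ = Matrix.toEuclideanLin (NormedSpace.exp ((-(τ : ℂ)) • H)) ψ₀) :
    (∀ τ : ℝ, ψ τ ≠ 0) ∧
    Tendsto (fun τ : ℝ =>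
        (inner ℂ (ψ τ) (Matrix.toEuclideanLin H (ψ τ)) : ℂ) / ((‖ψ τ‖ : ℂ) ^ 2))
      atTop (nhds (lammin : ℂ)) := by
  classical
  set B := hH.eigenvectorBasis with hB
  set lam := hH.eigenvalues with hlamdef
  -- eigenvalue lower bound
  have hle : ∀ j, lammin ≤ lam j := by
    intro j
    rw [hlam]
    exact ciInf_le (Finite.bddBelow_range _) j
  -- eigen equations for toEuclideanLin
  have hBH : ∀ j, Matrix.toEuclideanLin H (B j) = (lam j : ℂ) • B j := by
    intro j
    apply toEuclideanLin_eigen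
    rw [show ((lam j : ℂ) • ⇑(B j) : Fin N → ℂ) = lam j • ⇑(B j) from
      (RCLike.real_smul_eq_coe_smul (K := ℂ) _ _).symm]
    exact hH.mulVec_eigenvectorBasis j
  have hBexp : ∀ (τ : ℝ) j, Matrix.toEuclideanLin (NormedSpace.exp ((-(τ : ℂ)) • H)) (B j)
      = Complex.exp ((-(τ : ℂ)) * (lam j : ℂ)) • B j := by
    intro τ j
    exact toEuclideanLin_eigen N _ _ _ (exp_smul_mulVec_eigen N H hH (-(τ : ℂ)) j)
  -- repr computation key
  have key : ∀ (M : Matrix (Fin N) (Fin N) ℂ) (μ : Fin N → ℂ),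
      (∀ i, Matrix.toEuclideanLin M (B i) = μ i • B i) →
      ∀ (x : EuclideanSpace ℂ (Fin N)) j, B.repr (Matrix.toEuclideanLin M x) j
        = μ j * B.repr x j := by
    intro M μ hM x j
    have hON := orthonormal_iff_ite.mp B.orthonormal
    rw [B.repr_apply_apply]
    conv_lhs => rw [← B.sum_repr x, map_sum]
    rw [inner_sum]
    simp_rw [_root_.map_smul, hM, smul_smul, inner_smul_right, hON]
    rw [Finset.sum_eq_single j]
    · rw [if_pos rfl, mul_one, B.repr_apply_apply]
      ring
    · intro i _ hij
      rw [if_neg (Ne.symm hij), mul_zero]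
    · intro h
      exact absurd (Finset.mem_univ j) h
  set c : Fin N → ℂ := fun i => B.repr ψ₀ i with hc
  set a : Fin N → ℝ := fun i => Complex.normSq (c i) with ha
  have ha_nonneg : ∀ j, 0 ≤ a j := fun j => Complex.normSq_nonneg _
  -- existence of ground component
  have hex : ∃ j₀, lam j₀ = lammin ∧ c j₀ ≠ 0 := by
    by_contra hcon
    push_neg at hcon
    apply hproj
    have hmem : ψ₀ ∈ (Module.End.eigenspace (Matrix.toEuclideanLin H) (lammin : ℂ))ᗮ := by
      rw [Submodule.mem_orthogonal]
      intro v hv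
      rw [Module.End.mem_eigenspace_iff] at hv
      have hd : ∀ j, lam j ≠ lammin → B.repr v j = 0 := by
        intro j hj
        have h1 : (lam j : ℂ) * B.repr v j = (lammin : ℂ) * B.repr v j := by
          have h2 := key H (fun i => (lam i : ℂ)) hBH v j
          rw [hv, _root_.map_smul] at h2
          simpa using h2.symm
        have h2 : ((lam j : ℂ) - (lammin : ℂ)) * B.repr v j = 0 := by
          rw [sub_mul, h1]; ring
        rcases mul_eq_zero.mp h2 with h | h
        · exact absurd (by exact_mod_cast sub_eq_zero.mp h) hj
        · exact h
      have hinner : (inner ℂ v ψ₀ : ℂ)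
          = ∑ j, (starRingEnd ℂ) (B.repr v j) * (B.repr ψ₀ j) := by
        have hmm := B.repr.inner_map_map v ψ₀
        rw [← hmm]
        simp only [PiLp.inner_apply, RCLike.inner_apply]
        exact Finset.sum_congr rfl (fun _ _ => mul_comm _ _)
      rw [hinner]
      apply Finset.sum_eq_zero
      intro j _
      by_cases hj : lam j = lammin
      · have : c j = 0 := hcon j hj
        rw [hc] at this
        simp only [this, mul_zero]
      · rw [hd j hj]
        simp
    rw [Submodule.orthogonalProjectionOnto_eq_zero_iff.mpr hmem]
    rfl
  obtain ⟨j₀, hj₀, hcj₀⟩ := hex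
  have haj₀ : 0 < a j₀ := by
    rw [ha]
    exact Complex.normSq_pos.mpr hcj₀
  -- exponentials
  set ee : ℝ → Fin N → ℝ := fun τ j => Real.exp (-(τ * lam j)) with hee
  have hreprψ : ∀ (τ : ℝ) j, B.repr (ψ τ) j = ((ee τ j : ℝ) : ℂ) * c j := by
    intro τ j
    rw [hψ τ, key _ _ (hBexp τ) ψ₀ j]
    congr 1
    rw [show (-(τ : ℂ)) * ((lam j : ℝ) : ℂ) = ((-(τ * lam j) : ℝ) : ℂ) by push_cast; ring,
      ← Complex.ofReal_exp]
  have hreprH : ∀ (τ : ℝ) j, B.repr (Matrix.toEuclideanLin H (ψ τ)) j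
      = (lam j : ℂ) * (((ee τ j : ℝ) : ℂ) * c j) := by
    intro τ j
    rw [key H (fun i => (lam i : ℂ)) hBH (ψ τ) j, hreprψ τ j]
  -- inner products
  have hinnersum : ∀ (x y : EuclideanSpace ℂ (Fin N)), (inner ℂ x y : ℂ)
      = ∑ j, (starRingEnd ℂ) (B.repr x j) * (B.repr y j) := by
    intro x y
    have hmm := B.repr.inner_map_map x y
    rw [← hmm]
    simp only [PiLp.inner_apply, RCLike.inner_apply]
    exact Finset.sum_congr rfl (fun _ _ => mul_comm _ _)
  have hnum : ∀ τ : ℝ, (inner ℂ (ψ τ) (Matrix.toEuclideanLin H (ψ τ)) : ℂ)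
      = ((∑ j, lam j * (ee τ j) ^ 2 * a j : ℝ) : ℂ) := by
    intro τ
    rw [hinnersum]
    push_cast
    apply Finset.sum_congr rfl
    intro j _
    rw [hreprψ, hreprH, _root_.map_mul, Complex.conj_ofReal]
    rw [show ((ee τ j : ℝ) : ℂ) * (starRingEnd ℂ) (c j)
        * ((lam j : ℂ) * (((ee τ j : ℝ) : ℂ) * c j))
        = (lam j : ℂ) * ((ee τ j : ℝ) : ℂ) ^ 2 * ((starRingEnd ℂ) (c j) * c j) by ring]
    rw [← Complex.normSq_eq_conj_mul_self]
  have hden : ∀ τ : ℝ, ((‖ψ τ‖ : ℂ)) ^ 2 = ((∑ j, (ee τ j) ^ 2 * a j : ℝ) : ℂ) := by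
    intro τ
    have hsq : ((‖ψ τ‖ : ℂ)) ^ 2 = (inner ℂ (ψ τ) (ψ τ) : ℂ) := by
      rw [inner_self_eq_norm_sq_to_K]
      norm_cast
    rw [hsq, hinnersum]
    push_cast
    apply Finset.sum_congr rfl
    intro j _
    rw [hreprψ, _root_.map_mul, Complex.conj_ofReal]
    rw [show ((ee τ j : ℝ) : ℂ) * (starRingEnd ℂ) (c j) * (((ee τ j : ℝ) : ℂ) * c j)
        = ((ee τ j : ℝ) : ℂ) ^ 2 * ((starRingEnd ℂ) (c j) * c j) by ring]
    rw [← Complex.normSq_eq_conj_mul_self]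
  -- positivity of denominator
  have hDpos : ∀ τ : ℝ, 0 < ∑ j, (ee τ j) ^ 2 * a j := by
    intro τ
    apply Finset.sum_pos'
    · intro j _
      exact mul_nonneg (sq_nonneg _) (ha_nonneg j)
    · exact ⟨j₀, Finset.mem_univ j₀,
        mul_pos (pow_pos (Real.exp_pos _) 2) haj₀⟩
  have hnz : ∀ τ : ℝ, ψ τ ≠ 0 := by
    intro τ h0
    have h1 := hden τ
    rw [h0] at h1
    simp only [norm_zero] at h1
    have h2 : (0 : ℝ) ^ 2 = ∑ j, (ee τ j) ^ 2 * a j := by exact_mod_cast h1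
    rw [pow_two, mul_zero] at h2
    linarith [hDpos τ]
  refine ⟨hnz, ?_⟩
  -- real analysis
  set w : ℝ → Fin N → ℝ := fun τ j => Real.exp (2 * τ * (lammin - lam j)) with hw
  have hwe : ∀ τ j, w τ j = (ee τ j) ^ 2 * Real.exp (2 * τ * lammin) := by
    intro τ j
    rw [hw, hee]
    simp only []
    rw [pow_two, ← Real.exp_add, ← Real.exp_add]
    congr 1
    ring
  set P : ℝ := ∑ j, (if lam j = lammin then a j else 0) with hP
  have hPpos : 0 < P := by
    rw [hP]
    apply Finset.sum_pos'
    · intro j _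
      split <;> simp [ha_nonneg j]
    · refine ⟨j₀, Finset.mem_univ j₀, ?_⟩
      rw [if_pos hj₀]
      exact haj₀
  have hwlim : ∀ j, Tendsto (fun τ => w τ j) atTop
      (nhds (if lam j = lammin then 1 else 0)) := by
    intro j
    by_cases hj : lam j = lammin
    · rw [if_pos hj]
      have : (fun τ => w τ j) = fun _ => 1 := by
        funext τ
        rw [hw]
        simp [hj]
      rw [this]
      exact tendsto_const_nhds
    · rw [if_neg hj]
      have hlt : lammin < lam j := lt_of_le_of_ne (hle j) (Ne.symm hj)
      have hlin : Tendsto (fun τ : ℝ => 2 * τ * (lammin - lam j)) atTop atBot := by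
        have h2 : Tendsto (fun τ : ℝ => 2 * τ) atTop atTop :=
          tendsto_id.const_mul_atTop two_pos
        exact h2.atTop_mul_const_of_neg (by linarith)
      exact Real.tendsto_exp_atBot.comp hlin
  have hDlim : Tendsto (fun τ => ∑ j, w τ j * a j) atTop (nhds P) := by
    rw [hP]
    apply tendsto_finset_sum
    intro j _
    have := (hwlim j).mul_const (a j)
    by_cases hj : lam j = lammin
    · simpa [hj] using this
    · simpa [hj] using this
  have hNlim : Tendsto (fun τ => ∑ j, lam j * w τ j * a j) atTop (nhds (lammin * P)) := by
    have heq : lammin * P = ∑ j, (if lam j = lammin then lam j * a j else 0) := by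
      rw [hP, Finset.mul_sum]
      apply Finset.sum_congr rfl
      intro j _
      by_cases hj : lam j = lammin
      · rw [if_pos hj, if_pos hj, hj]
      · rw [if_neg hj, if_neg hj, mul_zero]
    rw [heq]
    apply tendsto_finset_sum
    intro j _
    have := ((hwlim j).const_mul (lam j)).mul_const (a j)
    by_cases hj : lam j = lammin
    · simpa [hj] using this
    · simpa [hj] using this
  have hdiv : Tendsto (fun τ => (∑ j, lam j * w τ j * a j) / (∑ j, w τ j * a j))
      atTop (nhds lammin) := by
    have := hNlim.div hDlim (ne_of_gt hPpos)
    rwa [mul_div_assoc, div_self (ne_of_gt hPpos), mul_one] at this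
  have := (Complex.continuous_ofReal.tendsto lammin).comp hdiv
  apply this.congr
  intro τ
  simp only [Function.comp_apply]
  rw [hnum τ, hden τ, ← Complex.ofReal_div]
  congr 1
  have hg : Real.exp (2 * τ * lammin) ≠ 0 := Real.exp_ne_zero _
  have hNw : (∑ j, lam j * w τ j * a j)
      = (∑ j, lam j * (ee τ j) ^ 2 * a j) * Real.exp (2 * τ * lammin) := by
    rw [Finset.sum_mul]
    apply Finset.sum_congr rfl
    intro j _
    rw [hwe]
    ring
  have hDw : (∑ j, w τ j * a j)
      = (∑ j, (ee τ j) ^ 2 * a j) * Real.exp (2 * τ * lammin) := by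
    rw [Finset.sum_mul]
    apply Finset.sum_congr rfl
    intro j _
    rw [hwe]
    ring
  rw [hNw, hDw, mul_div_mul_right _ _ hg]
end
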